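/- arXiv:0801.0079 — 2 statements merged into one kernel-verified Lean document; each statement's English description precedes it below -/
import Mathlib

section
/- (Lemma 3) Let μ̂_{i,m+1}(x_1,…,x_m,x_{m+1}) denote the SDMMSA estimate of the i-th mean computed from data (x_1,n_1),…,(x_{m+1},n_{m+1}). Suppose Ȳ_1 ≤ … ≤ Ȳ_m and Ȳ'_1 ≤ … ≤ Ȳ'_m are both nondecreasing and satisfy Ȳ_v ≤ Ȳ'_v for every v ∈ [1,m]. Then for every i ∈ [1,m+1] and every real Ȳ_{m+1}, μ̂_{i,m+1}(Ȳ_1,…,Ȳ_m,Ȳ_{m+1}) ≤ μ̂_{i,m+1}(Ȳ'_1,…,Ȳ'_m,Ȳ_{m+1}). -/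
open Finset

noncomputable section SDMMSA

/-- Pooled weight `n_{i,j} = ∑_{h=i}^j n_h`. -/
def pooledWeight (n : ℕ → ℝ) (i j : ℕ) : ℝ := ∑ h ∈ Finset.Icc i j, n h

/-- Pooled (weighted) mean `Ȳ_{i,j} = (∑_{h=i}^j n_h Y_h) / n_{i,j}`. -/
def pooledMean (n Y : ℕ → ℝ) (i j : ℕ) : ℝ :=
  (∑ h ∈ Finset.Icc i j, n h * Y h) / pooledWeight n i j

/-- The first SDMMSA index for the data `(Y_1,n_1),…,(Y_t,n_t)`:
the smallest `j ∈ [1,t]` at which `Ȳ_{j,t} = max_{1 ≤ j' ≤ t} Ȳ_{j',t}`. -/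
def firstIdx (n Y : ℕ → ℝ) (t : ℕ) : ℕ :=
  sInf {j | 1 ≤ j ∧ j ≤ t ∧ ∀ j', 1 ≤ j' → j' ≤ t → pooledMean n Y j' t ≤ pooledMean n Y j t}

/-- Fuel-based recursion implementing the SDMMSA step-down procedure: on data range `[1,t]`,
every `i ≥ i₁ = firstIdx n Y t` gets the pooled mean `Ȳ_{i₁,t}` of the top block, and for
`i < i₁` we recurse on the data range `[1, i₁ - 1]`.  A fuel of `t` suffices since the
range shrinks strictly at each step. -/
def sdmmsaAux (n Y : ℕ → ℝ) : ℕ → ℕ → ℕ → ℝ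
  | 0, _, _ => 0
  | fuel + 1, t, i =>
      if firstIdx n Y t ≤ i then pooledMean n Y (firstIdx n Y t) t
      else sdmmsaAux n Y fuel (firstIdx n Y t - 1) i

/-- `muhat n Y k i` is the SDMMSA estimate `μ̂_i` computed from the data
`(Y_1,n_1),…,(Y_k,n_k)`. -/
def muhat (n Y : ℕ → ℝ) (k i : ℕ) : ℝ := sdmmsaAux n Y k k i

/-- The SDMMSA indices `i_u` computed from the data `(Y_1,n_1),…,(Y_k,n_k)`:
`sdIdx n Y k 0 = i_0 = k+1` and `i_{u+1}` is the first SDMMSA index of `[1, i_u - 1]`. -/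
def sdIdx (n Y : ℕ → ℝ) (k : ℕ) : ℕ → ℕ
  | 0 => k + 1
  | u + 1 => firstIdx n Y (sdIdx n Y k u - 1)

/-- The number of steps `h` of the SDMMSA: the first `u` with `i_u = 1`. -/
def sdSteps (n Y : ℕ → ℝ) (k : ℕ) : ℕ := sInf {u | sdIdx n Y k u = 1}

end SDMMSA

open Finset

section Helpers

lemma pooledWeight_pos (n : ℕ → ℝ) {i j : ℕ} (hij : i ≤ j)
    (hpos : ∀ h, i ≤ h → h ≤ j → 0 < n h) : 0 < pooledWeight n i j := by
  unfold pooledWeight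
  apply Finset.sum_pos
  · intro h hh
    rw [Finset.mem_Icc] at hh
    exact hpos h hh.1 hh.2
  · exact ⟨i, by simp [hij]⟩

lemma firstIdx_mem (n Y : ℕ → ℝ) {t : ℕ} (ht : 1 ≤ t) :
    1 ≤ firstIdx n Y t ∧ firstIdx n Y t ≤ t ∧
      ∀ j', 1 ≤ j' → j' ≤ t →
        pooledMean n Y j' t ≤ pooledMean n Y (firstIdx n Y t) t := by
  have : firstIdx n Y t ∈ {j | 1 ≤ j ∧ j ≤ t ∧ ∀ j', 1 ≤ j' → j' ≤ t →
      pooledMean n Y j' t ≤ pooledMean n Y j t} := by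
    apply Nat.sInf_mem
    obtain ⟨b, hb, hmax⟩ := Finset.exists_max_image (Finset.Icc 1 t)
      (fun j => pooledMean n Y j t) ⟨1, by simp [ht]⟩
    rw [Finset.mem_Icc] at hb
    exact ⟨b, hb.1, hb.2, fun j' h1 h2 => hmax j' (Finset.mem_Icc.mpr ⟨h1, h2⟩)⟩
  exact this

lemma firstIdx_lt_means (n Y : ℕ → ℝ) {t j : ℕ} (ht : 1 ≤ t) (h1 : 1 ≤ j)
    (hlt : j < firstIdx n Y t) :
    pooledMean n Y j t < pooledMean n Y (firstIdx n Y t) t := by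
  obtain ⟨hj1, hjt, hmax⟩ := firstIdx_mem n Y ht
  rcases lt_or_ge (pooledMean n Y j t) (pooledMean n Y (firstIdx n Y t) t) with h | h
  · exact h
  · exfalso
    exact Nat.notMem_of_lt_sInf hlt
      ⟨h1, by omega, fun j' a b => le_trans (hmax j' a b) h⟩

lemma sum_Icc_bot (f : ℕ → ℝ) {i t : ℕ} (h : i ≤ t) :
    ∑ h ∈ Finset.Icc i t, f h = f i + ∑ h ∈ Finset.Icc (i + 1) t, f h := by
  have he : Finset.Icc i t = insert i (Finset.Icc (i + 1) t) := by
    ext x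
    simp only [Finset.mem_Icc, Finset.mem_insert]
    omega
  rw [he, Finset.sum_insert (by simp)]

lemma pooledMean_mono (n Y Y' : ℕ → ℝ) {i t : ℕ} (hit : i ≤ t)
    (hpos : ∀ h, i ≤ h → h ≤ t → 0 < n h)
    (hYY : ∀ h, i ≤ h → h ≤ t → Y h ≤ Y' h) :
    pooledMean n Y i t ≤ pooledMean n Y' i t := by
  have hW : 0 < pooledWeight n i t := pooledWeight_pos n hit hpos
  unfold pooledMean
  rw [div_le_div_iff₀ hW hW]
  apply mul_le_mul_of_nonneg_right _ hW.le
  apply Finset.sum_le_sum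
  intro h hh
  rw [Finset.mem_Icc] at hh
  exact mul_le_mul_of_nonneg_left (hYY h hh.1 hh.2) (hpos h hh.1 hh.2).le

/-- If the mean over `[i+1,t]` is at most the mean over `[i,t]`, then the latter
is at most `Y i`. -/
lemma mean_le_head (n Y : ℕ → ℝ) {i t : ℕ} (hit : i < t)
    (hpos : ∀ h, i ≤ h → h ≤ t → 0 < n h)
    (hle : pooledMean n Y (i + 1) t ≤ pooledMean n Y i t) :
    pooledMean n Y i t ≤ Y i := by
  have hW2 : 0 < pooledWeight n (i + 1) t :=
    pooledWeight_pos n (by omega) (fun h h1 h2 => hpos h (by omega) h2)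
  have hW1 : 0 < pooledWeight n i t := pooledWeight_pos n hit.le hpos
  have hni : 0 < n i := hpos i le_rfl hit.le
  have e1 : pooledMean n Y i t * pooledWeight n i t = ∑ h ∈ Finset.Icc i t, n h * Y h :=
    div_mul_cancel₀ _ hW1.ne'
  have e2 : pooledMean n Y (i + 1) t * pooledWeight n (i + 1) t
      = ∑ h ∈ Finset.Icc (i + 1) t, n h * Y h := div_mul_cancel₀ _ hW2.ne'
  have e3 : pooledWeight n i t = n i + pooledWeight n (i + 1) t := sum_Icc_bot n hit.le
  have e4 : ∑ h ∈ Finset.Icc i t, n h * Y h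
      = n i * Y i + ∑ h ∈ Finset.Icc (i + 1) t, n h * Y h :=
    sum_Icc_bot (fun h => n h * Y h) hit.le
  have e5 : pooledMean n Y i t * (n i + pooledWeight n (i + 1) t)
      = n i * Y i + ∑ h ∈ Finset.Icc (i + 1) t, n h * Y h := by
    rw [← e3, e1, e4]
  have hle2 := mul_le_mul_of_nonneg_right hle hW2.le
  nlinarith [e2, e5, hle2, hni]

/-- If the mean over `[i,t]` is strictly less than that over `[i+1,t]`, then `Y i`
is strictly below the latter. -/
lemma head_lt_mean (n Y : ℕ → ℝ) {i t : ℕ} (hit : i < t)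
    (hpos : ∀ h, i ≤ h → h ≤ t → 0 < n h)
    (hlt : pooledMean n Y i t < pooledMean n Y (i + 1) t) :
    Y i < pooledMean n Y (i + 1) t := by
  have hW2 : 0 < pooledWeight n (i + 1) t :=
    pooledWeight_pos n (by omega) (fun h h1 h2 => hpos h (by omega) h2)
  have hW1 : 0 < pooledWeight n i t := pooledWeight_pos n hit.le hpos
  have hni : 0 < n i := hpos i le_rfl hit.le
  have e1 : pooledMean n Y i t * pooledWeight n i t = ∑ h ∈ Finset.Icc i t, n h * Y h :=
    div_mul_cancel₀ _ hW1.ne'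
  have e2 : pooledMean n Y (i + 1) t * pooledWeight n (i + 1) t
      = ∑ h ∈ Finset.Icc (i + 1) t, n h * Y h := div_mul_cancel₀ _ hW2.ne'
  have e3 : pooledWeight n i t = n i + pooledWeight n (i + 1) t := sum_Icc_bot n hit.le
  have e4 : ∑ h ∈ Finset.Icc i t, n h * Y h
      = n i * Y i + ∑ h ∈ Finset.Icc (i + 1) t, n h * Y h :=
    sum_Icc_bot (fun h => n h * Y h) hit.le
  have e5 : pooledMean n Y i t * (n i + pooledWeight n (i + 1) t)
      = n i * Y i + ∑ h ∈ Finset.Icc (i + 1) t, n h * Y h := by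
    rw [← e3, e1, e4]
  nlinarith [e2, e5, hni, hW2, mul_lt_mul_of_pos_right hlt hni,
    mul_lt_mul_of_pos_right hlt hW2]

/-- On nondecreasing data the SDMMSA fit is the data itself. -/
lemma sdmmsaAux_of_monotone (n : ℕ → ℝ) :
    ∀ (fuel : ℕ) (Y : ℕ → ℝ) (t : ℕ), t ≤ fuel →
      (∀ h, 1 ≤ h → h ≤ t → 0 < n h) →
      (∀ a b, 1 ≤ a → a ≤ b → b ≤ t → Y a ≤ Y b) →
      ∀ i, 1 ≤ i → i ≤ t → sdmmsaAux n Y fuel t i = Y i := by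
  intro fuel
  induction fuel with
  | zero => intro Y t ht _ _ i hi1 hi2; omega
  | succ f ih =>
    intro Y t ht hpos hmono i hi1 hi2
    have ht1 : 1 ≤ t := le_trans hi1 hi2
    obtain ⟨hj1, hjt, hjmax⟩ := firstIdx_mem n Y ht1
    rw [sdmmsaAux]
    by_cases hcase : firstIdx n Y t ≤ i
    · rw [if_pos hcase]
      set j := firstIdx n Y t with hjdef
      have hW : 0 < pooledWeight n j t :=
        pooledWeight_pos n hjt (fun h h1 h2 => hpos h (by omega) h2)
      have hmtt : pooledMean n Y t t = Y t := by
        unfold pooledMean pooledWeight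
        rw [Finset.Icc_self, Finset.sum_singleton, Finset.sum_singleton,
          mul_comm, mul_div_assoc, div_self (hpos t ht1 le_rfl).ne', mul_one]
      have hge : Y t ≤ pooledMean n Y j t := by
        rw [← hmtt]; exact hjmax t ht1 le_rfl
      have hlesum : ∑ h ∈ Finset.Icc j t, n h * Y h ≤ Y t * pooledWeight n j t := by
        unfold pooledWeight
        rw [Finset.mul_sum]
        apply Finset.sum_le_sum
        intro h hh
        rw [Finset.mem_Icc] at hh
        have := hmono h t (by omega) hh.2 le_rfl
        nlinarith [hpos h (by omega) hh.2]
      have hle' : pooledMean n Y j t ≤ Y t := by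
        unfold pooledMean
        rw [div_le_iff₀ hW]
        exact hlesum
      have hmean : pooledMean n Y j t = Y t := le_antisymm hle' hge
      have hsum : ∑ h ∈ Finset.Icc j t, n h * Y h = Y t * pooledWeight n j t := by
        have := hmean
        unfold pooledMean at this
        field_simp at this
        linarith [this]
      have hzero : ∑ h ∈ Finset.Icc j t, n h * (Y t - Y h) = 0 := by
        have : ∑ h ∈ Finset.Icc j t, n h * (Y t - Y h)
            = Y t * pooledWeight n j t - ∑ h ∈ Finset.Icc j t, n h * Y h := by
          unfold pooledWeight
          rw [Finset.mul_sum, ← Finset.sum_sub_distrib]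
          apply Finset.sum_congr rfl
          intro h _
          ring
        rw [this, hsum]
        ring
      have hall := (Finset.sum_eq_zero_iff_of_nonneg ?_).mp hzero i
        (Finset.mem_Icc.mpr ⟨hcase, hi2⟩)
      · have hni : 0 < n i := hpos i hi1 hi2
        have : Y t - Y i = 0 := by
          rcases mul_eq_zero.mp hall with h | h
          · exact absurd h hni.ne'
          · exact h
        rw [hmean]
        linarith
      · intro h hh
        rw [Finset.mem_Icc] at hh
        have h1 : 0 ≤ n h := (hpos h (by omega) hh.2).le
        have h2 : Y h ≤ Y t := hmono h t (by omega) hh.2 le_rfl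
        nlinarith
    · rw [if_neg hcase]
      exact ih Y (firstIdx n Y t - 1) (by omega)
        (fun h h1 h2 => hpos h h1 (by omega))
        (fun a b h1 h2 h3 => hmono a b h1 h2 (by omega))
        i hi1 (by omega)

/-- Evaluation of `muhat` on data that is nondecreasing except possibly at the top. -/
lemma muhat_eval (n Z : ℕ → ℝ) (m : ℕ)
    (hpos : ∀ h, 1 ≤ h → h ≤ m + 1 → 0 < n h)
    (hmono : ∀ a b, 1 ≤ a → a ≤ b → b ≤ m → Z a ≤ Z b)
    (i : ℕ) (hi1 : 1 ≤ i) (hi2 : i ≤ m + 1) :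
    muhat n Z (m + 1) i =
      if firstIdx n Z (m + 1) ≤ i then pooledMean n Z (firstIdx n Z (m + 1)) (m + 1)
      else Z i := by
  obtain ⟨hj1, hjt, hjmax⟩ := firstIdx_mem n Z (t := m + 1) (by omega)
  unfold muhat
  rw [sdmmsaAux]
  by_cases hcase : firstIdx n Z (m + 1) ≤ i
  · rw [if_pos hcase, if_pos hcase]
  · rw [if_neg hcase, if_neg hcase]
    have hi' : i < firstIdx n Z (m + 1) := by omega
    exact sdmmsaAux_of_monotone n m Z (firstIdx n Z (m + 1) - 1) (by omega)
      (fun h h1 h2 => hpos h h1 (by omega))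
      (fun a b h1 h2 h3 => hmono a b h1 h2 (by omega))
      i hi1 (by omega)

end Helpers
/-- Lemma 3: if `Ȳ` and `Ȳ'` are both nondecreasing on `[1,m]` with
`Ȳ_v ≤ Ȳ'_v` for every `v ∈ [1,m]`, then for every `i ∈ [1,m+1]` and every value
`Ȳ_{m+1}` of the last data point,
`μ̂_{i,m+1}(Ȳ_1,…,Ȳ_m,Ȳ_{m+1}) ≤ μ̂_{i,m+1}(Ȳ'_1,…,Ȳ'_m,Ȳ_{m+1})`. -/
theorem sdmmsa_monotone_in_first_m (m : ℕ) (hm : 1 ≤ m) (n Y Y' : ℕ → ℝ)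
    (hn : ∀ h, 1 ≤ h → h ≤ m + 1 → 0 < n h)
    (hY : ∀ v v', 1 ≤ v → v ≤ v' → v' ≤ m → Y v ≤ Y v')
    (hY' : ∀ v v', 1 ≤ v → v ≤ v' → v' ≤ m → Y' v ≤ Y' v')
    (hle : ∀ v, 1 ≤ v → v ≤ m → Y v ≤ Y' v)
    (ylast : ℝ) :
    ∀ i, 1 ≤ i → i ≤ m + 1 →
      muhat n (fun t => if t = m + 1 then ylast else Y t) (m + 1) i ≤
        muhat n (fun t => if t = m + 1 then ylast else Y' t) (m + 1) i := by
  intro i hi1 hi2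
  set Z : ℕ → ℝ := fun t => if t = m + 1 then ylast else Y t with hZdef
  set Z' : ℕ → ℝ := fun t => if t = m + 1 then ylast else Y' t with hZ'def
  have hZY : ∀ h, h ≤ m → Z h = Y h := by
    intro h hh; simp only [hZdef]; rw [if_neg (by omega)]
  have hZ'Y : ∀ h, h ≤ m → Z' h = Y' h := by
    intro h hh; simp only [hZ'def]; rw [if_neg (by omega)]
  have hZmono : ∀ a b, 1 ≤ a → a ≤ b → b ≤ m → Z a ≤ Z b := by
    intro a b h1 h2 h3
    rw [hZY a (by omega), hZY b h3]; exact hY a b h1 h2 h3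
  have hZ'mono : ∀ a b, 1 ≤ a → a ≤ b → b ≤ m → Z' a ≤ Z' b := by
    intro a b h1 h2 h3
    rw [hZ'Y a (by omega), hZ'Y b h3]; exact hY' a b h1 h2 h3
  have hZZ' : ∀ h, 1 ≤ h → h ≤ m + 1 → Z h ≤ Z' h := by
    intro h h1 h2
    by_cases hc : h = m + 1
    · simp [hZdef, hZ'def, hc]
    · rw [hZY h (by omega), hZ'Y h (by omega)]; exact hle h h1 (by omega)
  set j := firstIdx n Z (m + 1) with hjdef
  set j' := firstIdx n Z' (m + 1) with hj'def
  obtain ⟨hj1, hjt, hjmax⟩ := firstIdx_mem n Z (t := m + 1) (by omega)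
  obtain ⟨hj'1, hj't, hj'max⟩ := firstIdx_mem n Z' (t := m + 1) (by omega)
  set c := pooledMean n Z j (m + 1) with hcdef
  set c' := pooledMean n Z' j' (m + 1) with hc'def
  have hcc' : c ≤ c' := by
    calc c ≤ pooledMean n Z' j (m + 1) :=
          pooledMean_mono n Z Z' hjt (fun h h1 h2 => hn h (by omega) h2)
            (fun h h1 h2 => hZZ' h (by omega) h2)
      _ ≤ c' := hj'max j hj1 hjt
  rw [muhat_eval n Z m hn hZmono i hi1 hi2, muhat_eval n Z' m hn hZ'mono i hi1 hi2]
  by_cases h1 : j ≤ i <;> by_cases h2 : j' ≤ i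
  · rw [if_pos h1, if_pos h2]; exact hcc'
  · -- j ≤ i < j' : c ≤ Z j ≤ Y' i = Z' i
    rw [if_pos h1, if_neg h2]
    have hjm : j ≤ m := by omega
    have him : i ≤ m := by omega
    have hcj : c ≤ Z j := by
      apply mean_le_head n Z (by omega) (fun h hh1 hh2 => hn h (by omega) hh2)
      exact hjmax (j + 1) (by omega) (by omega)
    calc c ≤ Z j := hcj
      _ = Y j := hZY j hjm
      _ ≤ Y' j := hle j hj1 hjm
      _ ≤ Y' i := hY' j i hj1 h1 him
      _ = Z' i := (hZ'Y i him).symm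
  · -- j' ≤ i < j : Z i = Y i ≤ Y (j-1) < c ≤ c'
    rw [if_neg h1, if_pos h2]
    have hj2 : 2 ≤ j := by omega
    have hlt : pooledMean n Z (j - 1) (m + 1) < c := by
      apply firstIdx_lt_means n Z (by omega) (by omega) (by omega)
    have hkey : Z (j - 1) < c := by
      have heq : (j - 1) + 1 = j := by omega
      have := head_lt_mean n Z (i := j - 1) (t := m + 1) (by omega)
        (fun h hh1 hh2 => hn h (by omega) hh2) (by rw [heq]; exact hlt)
      rw [heq] at this
      exact this
    have : Z i ≤ Z (j - 1) := hZmono i (j - 1) hi1 (by omega) (by omega)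
    linarith
  · -- i < j, i < j'
    rw [if_neg h1, if_neg h2]
    exact hZZ' i hi1 hi2
end

section
/- (Theorem 5, monotone comparison form) Let Ȳ_0, Ȳ_1, …, Ȳ_k, V be independent with Ȳ_i ~ N(μ_i, σ²/n_i) and V ~ χ²_ν, and set S = σ√(V/ν). Let μ̂_j = μ̂_j(Ȳ_1,…,Ȳ_k) be the SDMMSA estimates with weights n_1,…,n_k. Fix i ∈ [1,k], δ ≥ 0 and nonnegative constants c_1,…,c_i, and let R_{c_1,…,c_i} = ∪_{j=1}^{i} {(μ̂_j − Ȳ_0 − δ)/S > c_j}. Then P_{(μ_0,μ_1,…,μ_k)}(R_{c_1,…,c_i}) is nondecreasing in each μ_j (j ∈ [1,k]) when μ_0, the other μ_{j'} and σ are held fixed; consequently, for any monotone configuration μ_1 ≤ … ≤ μ_k with μ_i ≤ μ_0 + δ, P_{(μ_0,μ_1,…,μ_k)}(R_{c_1,…,c_i}) ≤ P_{(μ_0,μ'_1,…,μ'_k)}(R_{c_1,…,c_i}), where μ'_j = μ_0 + δ for j ≤ i and μ'_j = max(μ_j, μ_0 + δ) for j > i. -/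
open Finset

open MeasureTheory ProbabilityTheory
namespace SDMMSAProof

open Finset

variable {n Y : ℕ → ℝ}

lemma pooledWeight_pos {i j : ℕ} (hij : i ≤ j) (hn : ∀ h, i ≤ h → h ≤ j → 0 < n h) :
    0 < pooledWeight n i j := by
  apply Finset.sum_pos
  · intro h hh; rw [Finset.mem_Icc] at hh; exact hn h hh.1 hh.2
  · exact Finset.nonempty_Icc.mpr hij

lemma Icc_split (f : ℕ → ℝ) (i b j : ℕ) (h1 : i ≤ b + 1) (h2 : b ≤ j) :
    ∑ h ∈ Icc i j, f h = (∑ h ∈ Icc i b, f h) + ∑ h ∈ Icc (b + 1) j, f h := by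
  rw [← Finset.sum_union]
  · congr 1; ext x; simp only [Finset.mem_union, Finset.mem_Icc]; omega
  · rw [Finset.disjoint_left]
    intro x hx hx'; simp only [Finset.mem_Icc] at hx hx'; omega

lemma pm_mul_pw {i j : ℕ} (hij : i ≤ j) (hn : ∀ h, i ≤ h → h ≤ j → 0 < n h) :
    pooledMean n Y i j * pooledWeight n i j = ∑ h ∈ Icc i j, n h * Y h := by
  rw [pooledMean, div_mul_cancel₀]
  exact (pooledWeight_pos hij hn).ne'

lemma split_identity {i b j : ℕ} (hib : i ≤ b) (hbj : b < j)
    (hn : ∀ h, i ≤ h → h ≤ j → 0 < n h) :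
    pooledMean n Y i b * pooledWeight n i b
      + pooledMean n Y (b + 1) j * pooledWeight n (b + 1) j
      = pooledMean n Y i j * pooledWeight n i j := by
  rw [pm_mul_pw hib (fun h hh1 hh2 => hn h hh1 (by omega)),
      pm_mul_pw (show b + 1 ≤ j by omega) (fun h hh1 hh2 => hn h (by omega) hh2),
      pm_mul_pw (show i ≤ j by omega) hn]
  exact (Icc_split (fun h => n h * Y h) i b j (by omega) (by omega)).symm

lemma pw_split {i b j : ℕ} (hib : i ≤ b) (hbj : b < j) :
    pooledWeight n i j = pooledWeight n i b + pooledWeight n (b + 1) j :=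
  Icc_split n i b j (by omega) (by omega)

/-- If `a` is a maximizer of `Ȳ_{·,t}` then `Ȳ_{a,t} ≤ Ȳ_{a,b}` for `a ≤ b ≤ t`. -/
lemma pm_left_ge {a b t : ℕ} (ha : 1 ≤ a) (hab : a ≤ b) (hbt : b ≤ t)
    (hn : ∀ h, 1 ≤ h → h ≤ t → 0 < n h)
    (hmax : ∀ j', 1 ≤ j' → j' ≤ t → pooledMean n Y j' t ≤ pooledMean n Y a t) :
    pooledMean n Y a t ≤ pooledMean n Y a b := by
  rcases eq_or_lt_of_le hbt with rfl | hbt'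
  · exact le_refl _
  · have hn' : ∀ h, a ≤ h → h ≤ t → 0 < n h := fun h h1 h2 => hn h (by omega) h2
    have W1 := pooledWeight_pos (n := n) hab (fun h h1 h2 => hn h (by omega) (by omega))
    have W2 := pooledWeight_pos (n := n) (show b + 1 ≤ t by omega)
      (fun h h1 h2 => hn h (by omega) h2)
    have hsplit := split_identity (n := n) (Y := Y) hab hbt' hn'
    have hwsplit := pw_split (n := n) hab hbt'
    have hy := hmax (b + 1) (by omega) (by omega)
    have hy' := mul_le_mul_of_nonneg_right hy W2.le
    rw [hwsplit, mul_add] at hsplit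
    refine le_of_mul_le_mul_right ?_ W1
    linarith

/-- If `a` is a maximizer of `Ȳ_{·,t}` then `Ȳ_{s,a-1} ≤ Ȳ_{a,t}` for `1 ≤ s ≤ a-1`. -/
lemma pm_lower_le {s a t : ℕ} (hs : 1 ≤ s) (hsa : s ≤ a - 1) (ha2 : 2 ≤ a) (hat : a ≤ t)
    (hn : ∀ h, 1 ≤ h → h ≤ t → 0 < n h)
    (hmax : ∀ j', 1 ≤ j' → j' ≤ t → pooledMean n Y j' t ≤ pooledMean n Y a t) :
    pooledMean n Y s (a - 1) ≤ pooledMean n Y a t := by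
  have hn' : ∀ h, s ≤ h → h ≤ t → 0 < n h := fun h h1 h2 => hn h (by omega) h2
  have hsplit := split_identity (n := n) (Y := Y) (i := s) (b := a - 1) (j := t)
    hsa (by omega) hn'
  have e : a - 1 + 1 = a := by omega
  rw [e] at hsplit
  have hwsplit := pw_split (n := n) (i := s) (b := a - 1) (j := t) hsa (by omega)
  rw [e] at hwsplit
  have W1 := pooledWeight_pos (n := n) hsa (fun h h1 h2 => hn h (by omega) (by omega))
  have W2 := pooledWeight_pos (n := n) hat (fun h h1 h2 => hn h (by omega) h2)
  have hm := hmax s hs (by omega)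
  rw [hwsplit, mul_add] at hsplit
  have hm1 := mul_le_mul_of_nonneg_right hm W1.le
  have hm2 := mul_le_mul_of_nonneg_right hm W2.le
  refine le_of_mul_le_mul_right ?_ W1
  linarith

lemma firstIdx_spec (n Y : ℕ → ℝ) {t : ℕ} (ht : 1 ≤ t) :
    1 ≤ firstIdx n Y t ∧ firstIdx n Y t ≤ t ∧
      ∀ j', 1 ≤ j' → j' ≤ t →
        pooledMean n Y j' t ≤ pooledMean n Y (firstIdx n Y t) t := by
  have hne : {j | 1 ≤ j ∧ j ≤ t ∧ ∀ j', 1 ≤ j' → j' ≤ t →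
      pooledMean n Y j' t ≤ pooledMean n Y j t}.Nonempty := by
    obtain ⟨b, hb, hmaxb⟩ := Finset.exists_max_image (Finset.Icc 1 t)
      (fun j => pooledMean n Y j t) ⟨1, by simp [ht]⟩
    rw [Finset.mem_Icc] at hb
    exact ⟨b, hb.1, hb.2, fun j' h1 h2 => hmaxb j' (Finset.mem_Icc.mpr ⟨h1, h2⟩)⟩
  exact Nat.sInf_mem hne

lemma lower : ∀ (fuel t i : ℕ), t ≤ fuel → 1 ≤ i → i ≤ t →
    (∀ h, 1 ≤ h → h ≤ t → 0 < n h) →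
    ∀ b, i ≤ b → b ≤ t → ∃ s, 1 ≤ s ∧ s ≤ b ∧
      sdmmsaAux n Y fuel t i ≤ pooledMean n Y s b := by
  intro fuel
  induction fuel with
  | zero => intro t i ht hi hit hn b hib hbt; exfalso; omega
  | succ f ih =>
    intro t i htf hi hit hn b hib hbt
    obtain ⟨ha1, hat, hmax⟩ := firstIdx_spec n Y (t := t) (by omega)
    simp only [sdmmsaAux]
    by_cases hai : firstIdx n Y t ≤ i
    · rw [if_pos hai]
      exact ⟨firstIdx n Y t, ha1, by omega,
        pm_left_ge ha1 (by omega) hbt hn hmax⟩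
    · rw [if_neg hai]
      push_neg at hai
      by_cases hb : b ≤ firstIdx n Y t - 1
      · exact ih (firstIdx n Y t - 1) i (by omega) hi (by omega)
          (fun h h1 h2 => hn h h1 (by omega)) b hib hb
      · refine ⟨firstIdx n Y t, ha1, by omega, ?_⟩
        obtain ⟨s, hs1, hs2, hs3⟩ := ih (firstIdx n Y t - 1) i (by omega) hi (by omega)
          (fun h h1 h2 => hn h h1 (by omega)) (firstIdx n Y t - 1) (by omega) le_rfl
        calc sdmmsaAux n Y f (firstIdx n Y t - 1) i
            ≤ pooledMean n Y s (firstIdx n Y t - 1) := hs3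
          _ ≤ pooledMean n Y (firstIdx n Y t) t :=
              pm_lower_le hs1 hs2 (by omega) hat hn hmax
          _ ≤ pooledMean n Y (firstIdx n Y t) b :=
              pm_left_ge ha1 (by omega) hbt hn hmax

lemma upper : ∀ (fuel t i : ℕ), t ≤ fuel → 1 ≤ i → i ≤ t →
    ∃ b, i ≤ b ∧ b ≤ t ∧ ∀ s, 1 ≤ s → s ≤ b →
      pooledMean n Y s b ≤ sdmmsaAux n Y fuel t i := by
  intro fuel
  induction fuel with
  | zero => intro t i ht hi hit; exfalso; omega
  | succ f ih =>
    intro t i htf hi hit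
    obtain ⟨ha1, hat, hmax⟩ := firstIdx_spec n Y (t := t) (by omega)
    simp only [sdmmsaAux]
    by_cases hai : firstIdx n Y t ≤ i
    · rw [if_pos hai]
      exact ⟨t, hit, le_rfl, fun s h1 h2 => hmax s h1 h2⟩
    · rw [if_neg hai]
      push_neg at hai
      obtain ⟨b, hb1, hb2, hb3⟩ := ih (firstIdx n Y t - 1) i (by omega) hi (by omega)
      exact ⟨b, hb1, by omega, hb3⟩

lemma muhat_mono (k i : ℕ) (hi : 1 ≤ i) (hik : i ≤ k)
    (hn : ∀ h, 1 ≤ h → h ≤ k → 0 < n h) {Y Y' : ℕ → ℝ}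
    (hY : ∀ h, 1 ≤ h → h ≤ k → Y h ≤ Y' h) :
    muhat n Y k i ≤ muhat n Y' k i := by
  obtain ⟨b, hb1, hb2, hb3⟩ := upper (n := n) (Y := Y') k k i le_rfl hi hik
  obtain ⟨s, hs1, hs2, hs3⟩ := lower (n := n) (Y := Y) k k i le_rfl hi hik hn b hb1 hb2
  refine hs3.trans (le_trans ?_ (hb3 s hs1 hs2))
  rw [pooledMean, pooledMean]
  have hw := pooledWeight_pos (n := n) hs2 (fun h h1 h2 => hn h (by omega) (by omega))
  rw [div_le_div_iff_of_pos_right hw]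
  apply Finset.sum_le_sum
  intro h hh
  rw [Finset.mem_Icc] at hh
  exact mul_le_mul_of_nonneg_left (hY h (by omega) (by omega)) (hn h (by omega) (by omega)).le

end SDMMSAProof
section Meas

open MeasureTheory

variable {α : Type*} [MeasurableSpace α] (n : ℕ → ℝ) (D : α → ℕ → ℝ)

lemma meas_pm (hD : ∀ h, Measurable fun a => D a h) (s b : ℕ) :
    Measurable fun a => pooledMean n (D a) s b := by
  unfold pooledMean
  exact (Finset.measurable_sum _ fun h _ => (hD h).const_mul (n h)).div_const _

lemma meas_S (hD : ∀ h, Measurable fun a => D a h) (t l : ℕ) :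
    MeasurableSet {a | 1 ≤ l ∧ l ≤ t ∧ ∀ j', 1 ≤ j' → j' ≤ t →
      pooledMean n (D a) j' t ≤ pooledMean n (D a) l t} := by
  by_cases h1 : 1 ≤ l ∧ l ≤ t
  · have he : {a | 1 ≤ l ∧ l ≤ t ∧ ∀ j', 1 ≤ j' → j' ≤ t →
        pooledMean n (D a) j' t ≤ pooledMean n (D a) l t}
        = ⋂ (j' : ℕ) (_ : 1 ≤ j') (_ : j' ≤ t),
            {a | pooledMean n (D a) j' t ≤ pooledMean n (D a) l t} := by
      ext a
      simp only [Set.mem_setOf_eq, Set.mem_iInter, h1.1, h1.2, true_and]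
    rw [he]
    exact MeasurableSet.iInter fun j' => MeasurableSet.iInter fun _ =>
      MeasurableSet.iInter fun _ =>
        measurableSet_le (meas_pm n D hD j' t) (meas_pm n D hD l t)
  · have he : {a | 1 ≤ l ∧ l ≤ t ∧ ∀ j', 1 ≤ j' → j' ≤ t →
        pooledMean n (D a) j' t ≤ pooledMean n (D a) l t} = (∅ : Set α) := by
      ext a
      simp only [Set.mem_setOf_eq, Set.mem_empty_iff_false, iff_false]
      intro hx
      exact h1 ⟨hx.1, hx.2.1⟩
    rw [he]
    exact MeasurableSet.empty

lemma meas_firstIdx (hD : ∀ h, Measurable fun a => D a h) (t : ℕ) :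
    Measurable fun a => firstIdx n (D a) t := by
  apply measurable_to_countable'
  intro m
  rcases Nat.eq_zero_or_pos m with rfl | hm
  · have he : (fun a => firstIdx n (D a) t) ⁻¹' {0} =
        ⋂ (l : ℕ), {a | 1 ≤ l ∧ l ≤ t ∧ ∀ j', 1 ≤ j' → j' ≤ t →
          pooledMean n (D a) j' t ≤ pooledMean n (D a) l t}ᶜ := by
      ext a
      simp only [Set.mem_preimage, Set.mem_singleton_iff, Set.mem_iInter,
        Set.mem_compl_iff, Set.mem_setOf_eq]
      constructor
      · intro h0 l hl
        rcases Nat.sInf_eq_zero.mp h0 with h | h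
        · exact absurd h.1 (by omega)
        · have : l ∈ {j | 1 ≤ j ∧ j ≤ t ∧ ∀ j', 1 ≤ j' → j' ≤ t →
              pooledMean n (D a) j' t ≤ pooledMean n (D a) j t} := hl
          rw [h] at this
          exact this
      · intro h
        have he2 : {j | 1 ≤ j ∧ j ≤ t ∧ ∀ j', 1 ≤ j' → j' ≤ t →
            pooledMean n (D a) j' t ≤ pooledMean n (D a) j t} = ∅ := by
          ext l
          simp only [Set.mem_setOf_eq, Set.mem_empty_iff_false, iff_false]
          exact h l
        rw [firstIdx, he2]
        exact Nat.sInf_empty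
    rw [he]
    exact MeasurableSet.iInter fun l => (meas_S n D hD t l).compl
  · have he : (fun a => firstIdx n (D a) t) ⁻¹' {m} =
        {a | 1 ≤ m ∧ m ≤ t ∧ ∀ j', 1 ≤ j' → j' ≤ t →
          pooledMean n (D a) j' t ≤ pooledMean n (D a) m t} ∩
        ⋂ (l : ℕ) (_ : l < m), {a | 1 ≤ l ∧ l ≤ t ∧ ∀ j', 1 ≤ j' → j' ≤ t →
          pooledMean n (D a) j' t ≤ pooledMean n (D a) l t}ᶜ := by
      ext a
      simp only [Set.mem_preimage, Set.mem_singleton_iff, Set.mem_inter_iff,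
        Set.mem_iInter, Set.mem_compl_iff, Set.mem_setOf_eq]
      constructor
      · intro h
        have hSne : {j | 1 ≤ j ∧ j ≤ t ∧ ∀ j', 1 ≤ j' → j' ≤ t →
            pooledMean n (D a) j' t ≤ pooledMean n (D a) j t}.Nonempty := by
          by_contra hh
          rw [Set.not_nonempty_iff_eq_empty] at hh
          rw [firstIdx, hh, Nat.sInf_empty] at h
          omega
        have hmem := Nat.sInf_mem hSne
        rw [firstIdx] at h
        rw [h] at hmem
        refine ⟨hmem, fun l hl hPl => ?_⟩
        have := Nat.sInf_le (show l ∈ {j | 1 ≤ j ∧ j ≤ t ∧ ∀ j', 1 ≤ j' → j' ≤ t →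
          pooledMean n (D a) j' t ≤ pooledMean n (D a) j t} from hPl)
        omega
      · rintro ⟨hm', hless⟩
        have h1 : sInf {j | 1 ≤ j ∧ j ≤ t ∧ ∀ j', 1 ≤ j' → j' ≤ t →
            pooledMean n (D a) j' t ≤ pooledMean n (D a) j t} ≤ m := Nat.sInf_le hm'
        have h2 := Nat.sInf_mem (⟨m, hm'⟩ : {j | 1 ≤ j ∧ j ≤ t ∧ ∀ j', 1 ≤ j' → j' ≤ t →
            pooledMean n (D a) j' t ≤ pooledMean n (D a) j t}.Nonempty)
        rw [firstIdx]
        rcases lt_or_eq_of_le h1 with h | h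
        · exact absurd h2 (hless _ h)
        · exact h
    rw [he]
    exact (meas_S n D hD t m).inter
      (MeasurableSet.iInter fun l => MeasurableSet.iInter fun _ =>
        (meas_S n D hD t l).compl)

lemma meas_sdmmsaAux (hD : ∀ h, Measurable fun a => D a h) :
    ∀ fuel t i, Measurable fun a => sdmmsaAux n (D a) fuel t i := by
  intro fuel
  induction fuel with
  | zero => intro t i; simp only [sdmmsaAux]; exact measurable_const
  | succ f ih =>
    intro t i
    have hg : Measurable fun p : α × ℕ =>
        if p.2 ≤ i then pooledMean n (D p.1) p.2 t
        else sdmmsaAux n (D p.1) f (p.2 - 1) i := by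
      apply measurable_from_prod_countable_left
      intro m
      by_cases hm : m ≤ i
      · simpa [hm] using meas_pm n D hD m t
      · simpa [hm] using ih (m - 1) i
    have := hg.comp (measurable_id.prodMk (meas_firstIdx n D hD t))
    simpa [sdmmsaAux, Function.comp_def] using this

lemma meas_muhat (hD : ∀ h, Measurable fun a => D a h) (k i : ℕ) :
    Measurable fun a => muhat n (D a) k i := meas_sdmmsaAux n D hD k k i

end Meas

noncomputable section

/-- The chi-squared distribution with `ν` degrees of freedom: the Gamma distribution with
shape `ν/2` and rate `1/2`. -/
def chiSquared (ν : ℕ) : Measure ℝ := gammaMeasure ((ν : ℝ) / 2) (1 / 2)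

/-- The joint law of `(Ȳ_0, (Ȳ_1,…,Ȳ_k), V)`: independent coordinates with
`Ȳ_0 ~ N(μ_0, σ²/n_0)`, `Ȳ_j ~ N(μ_j, σ²/n_j)` (coordinate `v : Fin k` carrying
`Ȳ_{v+1}`) and `V ~ χ²_ν`. -/
def jointLaw (k ν : ℕ) (n0 : ℝ) (n : ℕ → ℝ) (σ μ0 : ℝ) (μ : ℕ → ℝ) :
    Measure (ℝ × (Fin k → ℝ) × ℝ) :=
  (gaussianReal μ0 ((σ ^ 2 / n0).toNNReal)).prod
    ((Measure.pi fun v : Fin k =>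
        gaussianReal (μ ((v : ℕ) + 1)) ((σ ^ 2 / n ((v : ℕ) + 1)).toNNReal)).prod
      (chiSquared ν))

/-- The step-up rejection region `R_{c_1,…,c_i} = ∪_{j=1}^{i} {(μ̂_j - Ȳ_0 - δ)/S > c_j}`,
where `μ̂_j` is the SDMMSA estimate computed from `(Ȳ_1,…,Ȳ_k)` and `S = σ√(V/ν)`. -/
def stepUpRegion (k ν : ℕ) (n : ℕ → ℝ) (σ δ : ℝ) (i : ℕ) (c : ℕ → ℝ) :
    Set (ℝ × (Fin k → ℝ) × ℝ) :=
  {p | ∃ j, 1 ≤ j ∧ j ≤ i ∧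
    c j < (muhat n (fun t => if h : t - 1 < k then p.2.1 ⟨t - 1, h⟩ else 0) k j
            - p.1 - δ) / (σ * Real.sqrt (p.2.2 / ν))}

section Main

open MeasureTheory ProbabilityTheory

lemma meas_region (k ν : ℕ) (n : ℕ → ℝ) (σ δ : ℝ) (i : ℕ) (c : ℕ → ℝ) :
    MeasurableSet (stepUpRegion k ν n σ δ i c) := by
  have hD : ∀ h, Measurable fun p : ℝ × (Fin k → ℝ) × ℝ =>
      (fun t => if ht : t - 1 < k then p.2.1 ⟨t - 1, ht⟩ else 0) h := by
    intro h
    by_cases ht : h - 1 < k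
    · simpa [ht] using (measurable_snd.fst.eval (a := (⟨h - 1, ht⟩ : Fin k)))
    · simpa [ht] using measurable_const
  have he : stepUpRegion k ν n σ δ i c =
      ⋃ (j : ℕ) (_ : 1 ≤ j) (_ : j ≤ i),
        {p : ℝ × (Fin k → ℝ) × ℝ |
          c j < (muhat n (fun t => if h : t - 1 < k then p.2.1 ⟨t - 1, h⟩ else 0) k j
            - p.1 - δ) / (σ * Real.sqrt (p.2.2 / ν))} := by
    ext p
    simp only [stepUpRegion, Set.mem_setOf_eq, Set.mem_iUnion]
    tauto
  rw [he]
  refine MeasurableSet.iUnion fun j => MeasurableSet.iUnion fun _ =>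
    MeasurableSet.iUnion fun _ => ?_
  apply measurableSet_lt measurable_const
  apply Measurable.div
  · exact ((meas_muhat n _ hD k j).sub measurable_fst).sub measurable_const
  · exact (Real.continuous_sqrt.measurable.comp
      (measurable_snd.snd.div_const _)).const_mul σ

lemma jointLaw_congr (k ν : ℕ) (n0 : ℝ) (n : ℕ → ℝ) (σ μ0 : ℝ) (μa μb : ℕ → ℝ)
    (h : ∀ j, 1 ≤ j → j ≤ k → μa j = μb j) :
    jointLaw k ν n0 n σ μ0 μa = jointLaw k ν n0 n σ μ0 μb := by
  unfold jointLaw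
  rw [show (fun v : Fin k => gaussianReal (μa ((v : ℕ) + 1)) ((σ ^ 2 / n ((v : ℕ) + 1)).toNNReal))
      = fun v : Fin k => gaussianReal (μb ((v : ℕ) + 1)) ((σ ^ 2 / n ((v : ℕ) + 1)).toNNReal)
    from funext fun v => by rw [h ((v : ℕ) + 1) (by omega) (Nat.succ_le_of_lt v.isLt)]]

end Main
/-- Theorem 5, monotone comparison form: the probability of the step-up
rejection region `R_{c_1,…,c_i}` is nondecreasing in each `μ_j`, `j ∈ [1,k]` (with `μ_0`,
the other means and `σ` fixed); consequently, for any monotone configuration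
`μ_1 ≤ … ≤ μ_k` with `μ_i ≤ μ_0 + δ`, the probability is at most the one obtained at the
configuration `μ'_j = μ_0 + δ` for `j ≤ i` and `μ'_j = max(μ_j, μ_0 + δ)` for `j > i`. -/
theorem stepUpRegion_prob_monotone (k : ℕ) (hk : 1 ≤ k) (ν : ℕ) (hν : 1 ≤ ν)
    (n0 : ℝ) (hn0 : 0 < n0) (n : ℕ → ℝ) (hn : ∀ h, 1 ≤ h → h ≤ k → 0 < n h)
    (σ : ℝ) (hσ : 0 < σ) (δ : ℝ) (hδ : 0 ≤ δ) (μ0 : ℝ)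
    (i : ℕ) (hi1 : 1 ≤ i) (hik : i ≤ k)
    (c : ℕ → ℝ) (hc : ∀ j, 1 ≤ j → j ≤ i → 0 ≤ c j) :
    (∀ j, 1 ≤ j → j ≤ k → ∀ μ μ' : ℕ → ℝ,
      μ j ≤ μ' j → (∀ j', j' ≠ j → μ j' = μ' j') →
      jointLaw k ν n0 n σ μ0 μ (stepUpRegion k ν n σ δ i c) ≤
        jointLaw k ν n0 n σ μ0 μ' (stepUpRegion k ν n σ δ i c)) ∧
    (∀ μ : ℕ → ℝ, (∀ j j', 1 ≤ j → j ≤ j' → j' ≤ k → μ j ≤ μ j') → μ i ≤ μ0 + δ →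
      jointLaw k ν n0 n σ μ0 μ (stepUpRegion k ν n σ δ i c) ≤
        jointLaw k ν n0 n σ μ0
          (fun j => if j ≤ i then μ0 + δ else max (μ j) (μ0 + δ))
          (stepUpRegion k ν n σ δ i c)) := by
  classical
  have part1 : ∀ j, 1 ≤ j → j ≤ k → ∀ μ μ' : ℕ → ℝ,
      μ j ≤ μ' j → (∀ j', j' ≠ j → μ j' = μ' j') →
      jointLaw k ν n0 n σ μ0 μ (stepUpRegion k ν n σ δ i c) ≤
        jointLaw k ν n0 n σ μ0 μ' (stepUpRegion k ν n σ δ i c) := by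
    intro j hj1 hjk μ μ' hle heq
    have ht0' : (0:ℝ) ≤ μ' j - μ j := by linarith
    have hjlt : j - 1 < k := by omega
    set v : Fin k := ⟨j - 1, hjlt⟩ with hv
    set f : Fin k → ℝ → ℝ := fun w y => y + (if w = v then μ' j - μ j else 0) with hf
    have hmpf : ∀ w : Fin k, MeasurePreserving (f w)
        (gaussianReal (μ ((w : ℕ) + 1)) ((σ ^ 2 / n ((w : ℕ) + 1)).toNNReal))
        (gaussianReal (μ' ((w : ℕ) + 1)) ((σ ^ 2 / n ((w : ℕ) + 1)).toNNReal)) := by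
      intro w
      refine ⟨measurable_id.add_const _, ?_⟩
      rw [hf]
      rw [gaussianReal_map_add_const]
      congr 1
      by_cases hw : w = v
      · subst hw
        rw [if_pos rfl, show ((v : Fin k) : ℕ) + 1 = j from by simp [hv]; omega]
        ring
      · rw [if_neg hw, add_zero]
        refine heq ((w : ℕ) + 1) fun hcon => hw (Fin.ext ?_)
        simp only [hv]
        omega
    haveI : IsProbabilityMeasure (chiSquared ν) := by
      apply isProbabilityMeasure_gammaMeasure
      · positivity
      · norm_num
    have hφ := measurePreserving_pi
      (fun w : Fin k => gaussianReal (μ ((w : ℕ) + 1)) ((σ ^ 2 / n ((w : ℕ) + 1)).toNNReal))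
      (fun w : Fin k => gaussianReal (μ' ((w : ℕ) + 1)) ((σ ^ 2 / n ((w : ℕ) + 1)).toNNReal))
      hmpf
    have hΦ : MeasurePreserving
        (Prod.map (id : ℝ → ℝ)
          (Prod.map (fun (x : Fin k → ℝ) (w : Fin k) => f w (x w)) (id : ℝ → ℝ)))
        (jointLaw k ν n0 n σ μ0 μ) (jointLaw k ν n0 n σ μ0 μ') :=
      (MeasurePreserving.id _).prod (hφ.prod (MeasurePreserving.id _))
    have hR := meas_region k ν n σ δ i c
    rw [← hΦ.map_eq, Measure.map_apply hΦ.measurable hR]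
    apply measure_mono
    rintro p ⟨j0, hj01, hj0i, hj0⟩
    refine ⟨j0, hj01, hj0i, ?_⟩
    simp only [Set.mem_preimage, Prod.map, id_eq]
    have hS : 0 < σ * Real.sqrt (p.2.2 / ν) := by
      rcases (mul_nonneg hσ.le (Real.sqrt_nonneg _)).lt_or_eq with h | h
      · exact h
      · rw [← h, div_zero] at hj0
        exact absurd hj0 (not_lt.mpr (hc j0 hj01 hj0i))
    have hmu : muhat n (fun t => if h : t - 1 < k then p.2.1 ⟨t - 1, h⟩ else 0) k j0 ≤
        muhat n (fun t => if h : t - 1 < k then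
          (fun w : Fin k => f w (p.2.1 w)) ⟨t - 1, h⟩ else 0) k j0 := by
      apply SDMMSAProof.muhat_mono k j0 hj01 (hj0i.trans hik) hn
      intro h h1 h2
      have hhk : h - 1 < k := by omega
      simp only [hhk, dif_pos, hf]
      have : (0:ℝ) ≤ if (⟨h - 1, hhk⟩ : Fin k) = v then μ' j - μ j else 0 := by
        split <;> simp [ht0']
      linarith
    calc c j0 < (muhat n (fun t => if h : t - 1 < k then p.2.1 ⟨t - 1, h⟩ else 0) k j0
          - p.1 - δ) / (σ * Real.sqrt (p.2.2 / ν)) := hj0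
      _ ≤ _ := by
          rw [div_le_div_iff_of_pos_right hS]
          linarith
  refine ⟨part1, ?_⟩
  intro μ hmono hiδ
  set T : ℕ → ℝ := fun j => if j ≤ i then μ0 + δ else max (μ j) (μ0 + δ) with hT
  set ms : ℕ → ℕ → ℝ := fun m j => if 1 ≤ j ∧ j ≤ m then T j else μ j with hms
  have h0 : ms 0 = μ := by
    funext j
    simp only [hms]
    rw [if_neg (by omega)]
  have hchain : ∀ m, m ≤ k →
      jointLaw k ν n0 n σ μ0 μ (stepUpRegion k ν n σ δ i c) ≤
        jointLaw k ν n0 n σ μ0 (ms m) (stepUpRegion k ν n σ δ i c) := by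
    intro m
    induction m with
    | zero => intro _; rw [h0]
    | succ m ih =>
      intro hmk
      refine (ih (by omega)).trans ?_
      apply part1 (m + 1) (by omega) hmk
      · simp only [hms]
        rw [if_neg (by omega), if_pos (by omega)]
        simp only [hT]
        by_cases hmi : m + 1 ≤ i
        · rw [if_pos hmi]
          have := hmono (m + 1) i (by omega) hmi hik
          linarith [hiδ]
        · rw [if_neg hmi]
          exact le_max_left _ _
      · intro j' hj'
        simp only [hms]
        by_cases h : 1 ≤ j' ∧ j' ≤ m
        · rw [if_pos h, if_pos ⟨h.1, by omega⟩]
        · rw [if_neg h, if_neg (by omega)]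
  have hfinal : jointLaw k ν n0 n σ μ0 (ms k) = jointLaw k ν n0 n σ μ0 T :=
    jointLaw_congr k ν n0 n σ μ0 _ _ fun j h1 h2 => by
      simp only [hms]; rw [if_pos ⟨h1, h2⟩]
  calc jointLaw k ν n0 n σ μ0 μ (stepUpRegion k ν n σ δ i c)
      ≤ jointLaw k ν n0 n σ μ0 (ms k) (stepUpRegion k ν n σ δ i c) := hchain k le_rfl
    _ = jointLaw k ν n0 n σ μ0 T (stepUpRegion k ν n σ δ i c) := by rw [hfinal]
end
end
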